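/- Let n ≥ 3 and let u : ℝⁿ \ {0} → ℝ be positive and superharmonic (i.e., Δu ≤ 0 in the classical sense, with u of class C²). Then liminf_{y → 0} u(y) > 0. -/

import Mathlib

open Real Filter Topology Set

namespace Stmt18aux

noncomputable def Q {n : ℕ} (x : EuclideanSpace ℝ (Fin n)) : ℝ := ∑ j, x j ^ 2

lemma Q_eq {n : ℕ} (x : EuclideanSpace ℝ (Fin n)) : Q x = ‖x‖ ^ 2 := by
  rw [EuclideanSpace.norm_eq, Real.sq_sqrt (by positivity)]
  simp [Q, sq_abs]

lemma Q_pos {n : ℕ} {x : EuclideanSpace ℝ (Fin n)} (hx : x ≠ 0) : 0 < Q x := by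
  rw [Q_eq]; exact pow_pos (norm_pos_iff.mpr hx) 2

noncomputable def LQ {n : ℕ} (x : EuclideanSpace ℝ (Fin n)) :
    EuclideanSpace ℝ (Fin n) →L[ℝ] ℝ :=
  ∑ j, (2 * x j) • EuclideanSpace.proj j

lemma LQ_apply {n : ℕ} (x : EuclideanSpace ℝ (Fin n)) (i : Fin n) :
    LQ x (EuclideanSpace.single i 1) = 2 * x i := by
  simp [LQ, ContinuousLinearMap.sum_apply, EuclideanSpace.single_apply,
    Finset.sum_ite_eq', mul_ite]

lemma hasFDerivAt_Q {n : ℕ} (x : EuclideanSpace ℝ (Fin n)) : HasFDerivAt Q (LQ x) x := by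
  have h : ∀ j : Fin n, HasFDerivAt (fun y : EuclideanSpace ℝ (Fin n) => y j ^ 2)
      ((2 * x j) • EuclideanSpace.proj (𝕜 := ℝ) j) x := by
    intro j
    have h1 := (EuclideanSpace.proj (𝕜 := ℝ) j).hasFDerivAt (x := x)
    have h2 := h1.mul h1
    have heq : ((EuclideanSpace.proj (𝕜 := ℝ) j) x • EuclideanSpace.proj (𝕜 := ℝ) j
        + (EuclideanSpace.proj (𝕜 := ℝ) j) x • EuclideanSpace.proj (𝕜 := ℝ) j)
        = (2 * x j) • EuclideanSpace.proj (𝕜 := ℝ) (ι := Fin n) j := by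
      ext z
      simp [two_mul, mul_comm, add_mul]
    rw [heq] at h2
    refine HasFDerivAt.congr_of_eventuallyEq h2 ?_
    exact Filter.Eventually.of_forall fun y => by simp [sq]
  have := HasFDerivAt.fun_sum (fun j (_ : j ∈ Finset.univ) => h j)
  exact this


lemma hasFDerivAt_Qrpow {n : ℕ} (q : ℝ) {x : EuclideanSpace ℝ (Fin n)} (hx : x ≠ 0) :
    HasFDerivAt (fun y => Q y ^ q) ((q * Q x ^ (q - 1)) • LQ x) x := by
  have h := Real.hasDerivAt_rpow_const (x := Q x) (p := q) (Or.inl (Q_pos hx).ne')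
  exact h.comp_hasFDerivAt x (hasFDerivAt_Q x)

noncomputable def b {n : ℕ} (x : EuclideanSpace ℝ (Fin n)) : ℝ := Q x ^ (-(1/4) : ℝ)

lemma hasFDerivAt_b {n : ℕ} {x : EuclideanSpace ℝ (Fin n)} (hx : x ≠ 0) :
    HasFDerivAt b (((-(1/4) : ℝ) * Q x ^ (-(1/4) - 1 : ℝ)) • LQ x) x :=
  hasFDerivAt_Qrpow (-(1/4)) hx

lemma fderiv_b {n : ℕ} {x : EuclideanSpace ℝ (Fin n)} (hx : x ≠ 0) (i : Fin n) :
    fderiv ℝ b x (EuclideanSpace.single i 1)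
      = ((-(1/4) : ℝ) * Q x ^ (-(1/4) - 1 : ℝ)) * (2 * x i) := by
  rw [(hasFDerivAt_b hx).fderiv]
  simp [LQ_apply]

/-- the explicit first directional derivative -/
noncomputable def g {n : ℕ} (i : Fin n) (y : EuclideanSpace ℝ (Fin n)) : ℝ :=
  ((-(1/4) : ℝ) * Q y ^ (-(1/4) - 1 : ℝ)) * (2 * y i)

lemma hasFDerivAt_g {n : ℕ} {x : EuclideanSpace ℝ (Fin n)} (hx : x ≠ 0) (i : Fin n) :
    HasFDerivAt (g i)
      ((((-(1/4) : ℝ) * Q x ^ (-(1/4) - 1 : ℝ)) •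
          ((2 : ℝ) • (EuclideanSpace.proj i : EuclideanSpace ℝ (Fin n) →L[ℝ] ℝ)))
        + (2 * x i) • ((-(1/4) : ℝ) •
            (((-(1/4) - 1 : ℝ) * Q x ^ (-(1/4) - 1 - 1 : ℝ)) • LQ x))) x := by
  have hc : HasFDerivAt (fun y : EuclideanSpace ℝ (Fin n) => (-(1/4) : ℝ) * Q y ^ (-(1/4) - 1 : ℝ))
      ((-(1/4) : ℝ) • (((-(1/4) - 1 : ℝ) * Q x ^ (-(1/4) - 1 - 1 : ℝ)) • LQ x)) x :=
    (hasFDerivAt_Qrpow (-(1/4) - 1) hx).const_mul _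
  have hd : HasFDerivAt (fun y : EuclideanSpace ℝ (Fin n) => 2 * y i)
      ((2 : ℝ) • (EuclideanSpace.proj i : EuclideanSpace ℝ (Fin n) →L[ℝ] ℝ)) x :=
    (EuclideanSpace.proj (𝕜 := ℝ) i).hasFDerivAt.const_mul 2
  exact hc.mul hd

lemma fderiv2_b {n : ℕ} {x : EuclideanSpace ℝ (Fin n)} (hx : x ≠ 0) (i : Fin n) :
    fderiv ℝ (fun y => fderiv ℝ b y (EuclideanSpace.single i 1)) x (EuclideanSpace.single i 1)
      = ((-(1/4) : ℝ) * Q x ^ (-(1/4) - 1 : ℝ)) * 2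
        + (2 * x i) * ((-(1/4) : ℝ) * (((-(1/4) - 1 : ℝ) * Q x ^ (-(1/4) - 1 - 1 : ℝ)) * (2 * x i))) := by
  have hmem : {y : EuclideanSpace ℝ (Fin n) | y ≠ 0} ∈ 𝓝 x :=
    (isOpen_compl_singleton).mem_nhds hx
  have hev : (fun y => fderiv ℝ b y (EuclideanSpace.single i 1)) =ᶠ[𝓝 x] g i :=
    eventually_of_mem hmem (fun y hy => fderiv_b hy i)
  rw [hev.fderiv_eq, (hasFDerivAt_g hx i).fderiv]
  simp [LQ_apply]

lemma diffAt_g {n : ℕ} {x : EuclideanSpace ℝ (Fin n)} (hx : x ≠ 0) (i : Fin n) :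
    DifferentiableAt ℝ (g i) x := (hasFDerivAt_g hx i).differentiableAt

lemma lap_b_neg {n : ℕ} (hn : 3 ≤ n) {x : EuclideanSpace ℝ (Fin n)} (hx : x ≠ 0) :
    ∑ i, fderiv ℝ (fun y => fderiv ℝ b y (EuclideanSpace.single i 1)) x
      (EuclideanSpace.single i 1) < 0 := by
  have hQ := Q_pos hx
  have key : ∀ i : Fin n,
      fderiv ℝ (fun y => fderiv ℝ b y (EuclideanSpace.single i 1)) x (EuclideanSpace.single i 1)
      = (-(1/2) : ℝ) * Q x ^ (-(1/4) - 1 : ℝ)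
        + ((5/4 : ℝ) * Q x ^ (-(1/4) - 1 - 1 : ℝ)) * (x i ^ 2) := by
    intro i; rw [fderiv2_b hx i]; ring
  rw [Finset.sum_congr rfl (fun i _ => key i)]
  rw [Finset.sum_add_distrib, Finset.sum_const, ← Finset.mul_sum]
  have hQ' : ∑ i : Fin n, x i ^ 2 = Q x := rfl
  rw [hQ']
  have hpow : Q x ^ (-(1/4) - 1 - 1 : ℝ) * Q x = Q x ^ (-(1/4) - 1 : ℝ) := by
    rw [← Real.rpow_add_one hQ.ne']
    norm_num
  simp only [Finset.card_univ, Fintype.card_fin, nsmul_eq_mul, mul_assoc]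
  rw [hpow]
  have hQp : 0 < Q x ^ (-(1/4) - 1 : ℝ) := Real.rpow_pos_of_pos hQ _
  have hn' : (3 : ℝ) ≤ (n : ℝ) := by exact_mod_cast hn
  nlinarith [hQp, hn']


lemma b_eq_norm {n : ℕ} (x : EuclideanSpace ℝ (Fin n)) : b x = ‖x‖ ^ (-(1/2) : ℝ) := by
  have hb : b x = Q x ^ (-(1/4) : ℝ) := rfl
  rw [hb, Q_eq, ← Real.rpow_natCast ‖x‖ 2, ← Real.rpow_mul (norm_nonneg x)]
  norm_num

end Stmt18aux


lemma second_deriv_test {E : Type*} [NormedAddCommGroup E] [NormedSpace ℝ E]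
    {v : E → ℝ} {p₀ e : E}
    (hmin : IsLocalMin v p₀)
    (hd : ∀ᶠ y in 𝓝 p₀, DifferentiableAt ℝ v y)
    (hd2 : DifferentiableAt ℝ (fun y => fderiv ℝ v y e) p₀) :
    0 ≤ fderiv ℝ (fun y => fderiv ℝ v y e) p₀ e := by
  by_contra hK
  push_neg at hK
  set K := fderiv ℝ (fun y => fderiv ℝ v y e) p₀ e with hKdef
  set c : ℝ → E := fun t => p₀ + t • e with hcdef
  have hc : ∀ t : ℝ, HasDerivAt c e t := by
    intro t
    simpa [hcdef] using ((hasDerivAt_id t).smul_const e).const_add p₀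
  have hc0 : c 0 = p₀ := by simp [hcdef]
  have hcont : Continuous c := by fun_prop
  have htend : Tendsto c (𝓝 0) (𝓝 p₀) := by
    rw [← hc0]; exact hcont.continuousAt
  set φ : ℝ → ℝ := fun t => v (c t) with hφdef
  set ψ : ℝ → ℝ := fun t => fderiv ℝ v (c t) e with hψdef
  have hminφ : ∀ᶠ t in 𝓝 (0:ℝ), φ 0 ≤ φ t := by
    have := htend.eventually hmin
    simpa [hφdef, hc0] using this
  have hminφ' : IsLocalMin φ 0 := hminφ
  have hdt : ∀ᶠ t in 𝓝 (0:ℝ), HasDerivAt φ (ψ t) t := by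
    filter_upwards [htend.eventually hd] with t ht
    exact (ht.hasFDerivAt.comp_hasDerivAt t (hc t) : HasDerivAt (fun s => v (c s)) _ t)
  have hψ0 : ψ 0 = 0 := hminφ'.hasDerivAt_eq_zero hdt.self_of_nhds
  have hψd : HasDerivAt ψ K 0 := by
    have h1 : HasFDerivAt (fun y => fderiv ℝ v y e)
        (fderiv ℝ (fun y => fderiv ℝ v y e) p₀) (c 0) := by
      rw [hc0]; exact hd2.hasFDerivAt
    exact (h1.comp_hasDerivAt 0 (hc 0) : HasDerivAt (fun t => fderiv ℝ v (c t) e) _ 0)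
  have hslope : ∀ᶠ t in 𝓝[>] (0:ℝ), ψ t < 0 := by
    have h1 : Tendsto (slope ψ 0) (𝓝[≠] 0) (𝓝 K) := hasDerivAt_iff_tendsto_slope.1 hψd
    have h2 : ∀ᶠ t in 𝓝[≠] (0:ℝ), slope ψ 0 t < 0 := h1.eventually_lt_const hK
    have h3 : ∀ᶠ t in 𝓝[>] (0:ℝ), slope ψ 0 t < 0 :=
      h2.filter_mono (nhdsWithin_mono 0 (fun t ht => ne_of_gt ht))
    filter_upwards [h3, self_mem_nhdsWithin] with t hts htpos
    rw [slope_def_field, hψ0, sub_zero, sub_zero] at hts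
    by_contra hge
    push_neg at hge
    exact absurd (div_nonneg hge htpos.le) (not_le.mpr hts)
  obtain ⟨δ1, hδ1, hball⟩ := Metric.eventually_nhds_iff.mp (hdt.and hminφ)
  obtain ⟨δ2, hδ2, hIoo⟩ := mem_nhdsGT_iff_exists_Ioo_subset.mp hslope
  set t₀ := min δ1 δ2 / 2 with ht₀def
  have hδ2' : (0:ℝ) < δ2 := hδ2
  have ht₀pos : 0 < t₀ := by positivity
  have ht₀1 : t₀ < δ1 := by
    have := min_le_left δ1 δ2; simp only [ht₀def]; linarith
  have ht₀2 : t₀ < δ2 := by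
    have := min_le_right δ1 δ2; simp only [ht₀def]; linarith
  have hanti : StrictAntiOn φ (Icc 0 t₀) := by
    apply strictAntiOn_of_deriv_neg (convex_Icc 0 t₀)
    · intro t ht
      have habs : dist t (0:ℝ) < δ1 := by
        rw [Real.dist_eq, sub_zero, abs_of_nonneg ht.1]
        linarith [ht.2]
      exact ((hball habs).1.differentiableAt.continuousAt).continuousWithinAt
    · intro t ht
      rw [interior_Icc] at ht
      have habs : dist t (0:ℝ) < δ1 := by
        rw [Real.dist_eq, sub_zero, abs_of_nonneg ht.1.le]
        linarith [ht.2]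
      rw [(hball habs).1.deriv]
      exact hIoo ⟨ht.1, lt_trans ht.2 ht₀2⟩
  have h1 : φ t₀ < φ 0 :=
    hanti (left_mem_Icc.mpr ht₀pos.le) (right_mem_Icc.mpr ht₀pos.le) ht₀pos
  have h2 : φ 0 ≤ φ t₀ := by
    have habs : dist t₀ (0:ℝ) < δ1 := by
      rw [Real.dist_eq, sub_zero, abs_of_nonneg ht₀pos.le]; exact ht₀1
    exact (hball habs).2
  linarith


theorem stmt_18 (n : ℕ) (hn : 3 ≤ n)
    (u : EuclideanSpace ℝ (Fin n) → ℝ)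
    (hreg : ContDiffOn ℝ 2 u {x | x ≠ 0})
    (hpos : ∀ x : EuclideanSpace ℝ (Fin n), x ≠ 0 → 0 < u x)
    (hsuper : ∀ x : EuclideanSpace ℝ (Fin n), x ≠ 0 →
      (∑ i : Fin n, fderiv ℝ (fun y => fderiv ℝ u y (EuclideanSpace.single i 1)) x
        (EuclideanSpace.single i 1)) ≤ 0) :
    ∃ ε > 0, ∃ δ > 0, ∀ y : EuclideanSpace ℝ (Fin n), y ≠ 0 → ‖y‖ < δ → ε ≤ u y := by
  classical
  have hopen : IsOpen {x : EuclideanSpace ℝ (Fin n) | x ≠ 0} := isOpen_compl_singleton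
  have hn0 : 0 < n := by omega
  -- minimum of u on the unit sphere
  have hsne : (Metric.sphere (0 : EuclideanSpace ℝ (Fin n)) 1).Nonempty := by
    refine ⟨EuclideanSpace.single ⟨0, hn0⟩ 1, ?_⟩
    simp [EuclideanSpace.norm_single]
  have hsub : Metric.sphere (0 : EuclideanSpace ℝ (Fin n)) 1 ⊆ {x | x ≠ 0} := by
    intro x hx
    simp only [Metric.mem_sphere, dist_zero_right] at hx
    intro h
    rw [h] at hx
    simp at hx
  obtain ⟨xm, hxm, hxmin⟩ := (isCompact_sphere (0 : EuclideanSpace ℝ (Fin n)) 1).exists_isMinOn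
    hsne (hreg.continuousOn.mono hsub)
  set m := u xm with hmdef
  have hxm0 : xm ≠ 0 := hsub hxm
  have hm : 0 < m := hpos xm hxm0
  refine ⟨m / 2, by positivity, 1, one_pos, ?_⟩
  intro y hy hylt
  set r := ‖y‖ with hrdef
  have hr : 0 < r := norm_pos_iff.mpr hy
  set s := r / 4 with hsdef
  have hs : 0 < s := by positivity
  have hsr : s < r := by rw [hsdef]; linarith
  set C := m * s ^ ((1:ℝ)/2) with hCdef
  have hC : 0 < C := by
    have := Real.rpow_pos_of_pos hs ((1:ℝ)/2)
    positivity
  set v : EuclideanSpace ℝ (Fin n) → ℝ := fun x => u x - m + C * Stmt18aux.b x with hvdef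
  set A := Metric.closedBall (0 : EuclideanSpace ℝ (Fin n)) 1 ∩
      (Metric.ball (0 : EuclideanSpace ℝ (Fin n)) s)ᶜ with hAdef
  have hmemA : ∀ x : EuclideanSpace ℝ (Fin n), x ∈ A ↔ s ≤ ‖x‖ ∧ ‖x‖ ≤ 1 := by
    intro x
    simp [hAdef, Metric.mem_closedBall, Metric.mem_ball, dist_zero_right, not_lt, and_comm]
  have hA0 : ∀ x ∈ A, x ≠ 0 := by
    intro x hx h
    have h1 := ((hmemA x).1 hx).1
    rw [h] at h1
    simp at h1
    linarith
  have hAcomp : IsCompact A :=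
    (isCompact_closedBall _ _).inter_right Metric.isOpen_ball.isClosed_compl
  have hyA : y ∈ A := (hmemA y).2 ⟨by linarith, by linarith⟩
  have hudiff : ∀ x : EuclideanSpace ℝ (Fin n), x ≠ 0 → DifferentiableAt ℝ u x := fun x hx =>
    (hreg.contDiffAt (hopen.mem_nhds hx)).differentiableAt (by norm_num)
  have hvdiff : ∀ x : EuclideanSpace ℝ (Fin n), x ≠ 0 → DifferentiableAt ℝ v x := fun x hx =>
    ((hudiff x hx).sub_const m).add (((Stmt18aux.hasFDerivAt_b hx).differentiableAt).const_mul C)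
  have hvcont : ContinuousOn v A := fun x hx =>
    ((hvdiff x (hA0 x hx)).continuousAt).continuousWithinAt
  obtain ⟨p, hpA, hpmin⟩ := hAcomp.exists_isMinOn ⟨y, hyA⟩ hvcont
  obtain ⟨hps, hp1⟩ := (hmemA p).1 hpA
  have hp0 : p ≠ 0 := hA0 p hpA
  have hvp : 0 ≤ v p := by
    rcases eq_or_lt_of_le hps with heq | hlt
    · -- inner boundary ‖p‖ = s
      have hCb : C * Stmt18aux.b p = m := by
        rw [Stmt18aux.b_eq_norm p, ← heq, hCdef, mul_assoc, ← Real.rpow_add hs]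
        norm_num
      have hup := hpos p hp0
      simp only [hvdef]
      linarith
    rcases eq_or_lt_of_le hp1 with heq1 | hlt1
    · -- outer boundary ‖p‖ = 1
      have hum : m ≤ u p := hxmin (by simp [Metric.mem_sphere, dist_zero_right, heq1])
      have hbp : 0 < Stmt18aux.b p := Real.rpow_pos_of_pos (Stmt18aux.Q_pos hp0) _
      simp only [hvdef]
      nlinarith
    · -- interior minimum: contradiction with strict superharmonicity
      exfalso
      have hU : IsOpen {x : EuclideanSpace ℝ (Fin n) | s < ‖x‖ ∧ ‖x‖ < 1} :=
        (isOpen_lt continuous_const continuous_norm).inter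
          (isOpen_lt continuous_norm continuous_const)
      have hAnh : A ∈ 𝓝 p :=
        mem_nhds_iff.mpr ⟨_, fun x hx => (hmemA x).2 ⟨hx.1.le, hx.2.le⟩, hU, ⟨hlt, hlt1⟩⟩
      have hloc : IsLocalMin v p := hpmin.isLocalMin hAnh
      have hnhne : {x : EuclideanSpace ℝ (Fin n) | x ≠ 0} ∈ 𝓝 p := hopen.mem_nhds hp0
      have hdev : ∀ᶠ z in 𝓝 p, DifferentiableAt ℝ v z :=
        eventually_of_mem hnhne fun z hz => hvdiff z hz
      have hfv : ∀ (z : EuclideanSpace ℝ (Fin n)), z ≠ 0 → ∀ i : Fin n,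
          fderiv ℝ v z (EuclideanSpace.single i 1)
            = fderiv ℝ u z (EuclideanSpace.single i 1) + C * Stmt18aux.g i z := by
        intro z hz i
        have hv' : HasFDerivAt v (fderiv ℝ u z +
            C • (((-(1/4) : ℝ) * Stmt18aux.Q z ^ (-(1/4) - 1 : ℝ)) • Stmt18aux.LQ z)) z :=
          (((hudiff z hz).hasFDerivAt).sub_const m).add
            ((Stmt18aux.hasFDerivAt_b hz).const_mul C)
        rw [hv'.fderiv]
        simp only [ContinuousLinearMap.add_apply, ContinuousLinearMap.smul_apply,
          smul_eq_mul, Stmt18aux.LQ_apply, Stmt18aux.g]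
      have hu2 : ContDiffAt ℝ 2 u p := hreg.contDiffAt hnhne
      have hfd1 : DifferentiableAt ℝ (fderiv ℝ u) p :=
        (hu2.fderiv_right (m := 1) (by norm_num)).differentiableAt (by norm_num)
      have hkey : ∀ i : Fin n,
          0 ≤ fderiv ℝ (fun z => fderiv ℝ u z (EuclideanSpace.single i 1)) p
                (EuclideanSpace.single i 1)
              + C * fderiv ℝ (fun z => fderiv ℝ Stmt18aux.b z (EuclideanSpace.single i 1)) p
                (EuclideanSpace.single i 1) := by
        intro i
        have hgev : (fun z => fderiv ℝ Stmt18aux.b z (EuclideanSpace.single i 1))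
            =ᶠ[𝓝 p] Stmt18aux.g i :=
          eventually_of_mem hnhne fun z hz => Stmt18aux.fderiv_b hz i
        have hvev : (fun z => fderiv ℝ v z (EuclideanSpace.single i 1)) =ᶠ[𝓝 p]
            (fun z => fderiv ℝ u z (EuclideanSpace.single i 1) + C * Stmt18aux.g i z) :=
          eventually_of_mem hnhne fun z hz => hfv z hz i
        have hdu : DifferentiableAt ℝ
            (fun z => fderiv ℝ u z (EuclideanSpace.single i 1)) p :=
          hfd1.clm_apply (differentiableAt_const _)
        have hdg : DifferentiableAt ℝ (fun z => C * Stmt18aux.g i z) p :=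
          (Stmt18aux.diffAt_g hp0 i).const_mul C
        have hd2 : DifferentiableAt ℝ
            (fun z => fderiv ℝ v z (EuclideanSpace.single i 1)) p := by
          rw [hvev.differentiableAt_iff]
          exact hdu.add hdg
        have h0 := second_deriv_test hloc hdev hd2
        rw [hvev.fderiv_eq, fderiv_fun_add hdu hdg,
          fderiv_const_mul (Stmt18aux.diffAt_g hp0 i) C] at h0
        simp only [ContinuousLinearMap.add_apply, ContinuousLinearMap.smul_apply,
          smul_eq_mul] at h0
        rwa [← hgev.fderiv_eq] at h0
      have hsum : 0 ≤ ∑ i : Fin n,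
          (fderiv ℝ (fun z => fderiv ℝ u z (EuclideanSpace.single i 1)) p
              (EuclideanSpace.single i 1)
            + C * fderiv ℝ (fun z => fderiv ℝ Stmt18aux.b z (EuclideanSpace.single i 1)) p
              (EuclideanSpace.single i 1)) :=
        Finset.sum_nonneg fun i _ => hkey i
      rw [Finset.sum_add_distrib, ← Finset.mul_sum] at hsum
      have h1 := hsuper p hp0
      have h2 := Stmt18aux.lap_b_neg hn hp0
      have h3 := mul_neg_of_pos_of_neg hC h2
      linarith
  -- conclude
  have hvy : 0 ≤ v y := le_trans hvp (hpmin hyA)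
  have h4 : (4:ℝ) ^ ((1:ℝ)/2) = 2 := by
    rw [show (4:ℝ) = 2 ^ (2:ℕ) by norm_num, ← Real.rpow_natCast 2 2,
      ← Real.rpow_mul (by norm_num : (0:ℝ) ≤ 2)]
    norm_num
  have hs12 : s ^ ((1:ℝ)/2) = r ^ ((1:ℝ)/2) / 2 := by
    rw [hsdef, Real.div_rpow hr.le (by norm_num : (0:ℝ) ≤ 4), h4]
  have hrr : r ^ ((1:ℝ)/2) * r ^ (-(1/2) : ℝ) = 1 := by
    rw [← Real.rpow_add hr]
    norm_num
  have hCby : C * Stmt18aux.b y = m / 2 := by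
    rw [Stmt18aux.b_eq_norm y, ← hrdef, hCdef, hs12]
    calc m * (r ^ ((1:ℝ)/2) / 2) * r ^ (-(1/2) : ℝ)
        = m * (r ^ ((1:ℝ)/2) * r ^ (-(1/2) : ℝ)) / 2 := by ring
      _ = m / 2 := by rw [hrr]; ring
  simp only [hvdef] at hvy
  linarith
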